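/- If n ≥ 2 and s ≠ −r, then the minimal polynomial of the R-matrix Ř acting on V ⊗ V is (t − 1)(t + r s^{-1}). -/

import Mathlib

open Matrix Kronecker BigOperators

/-- The two-parameter R-matrix `Ř` on `V ⊗ V`, `V = ℂⁿ`, written in the basis
`v_i ⊗ v_j ↔ (i,j)`:
`Ř = Σᵢ Eᵢᵢ⊗Eᵢᵢ + r Σ_{i<j} Eⱼᵢ⊗Eᵢⱼ + s⁻¹ Σ_{i<j} Eᵢⱼ⊗Eⱼᵢ + (1 − r s⁻¹) Σ_{i<j} Eⱼⱼ⊗Eᵢᵢ`. -/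
noncomputable def Rhat (n : ℕ) (r s : ℂ) : Matrix (Fin n × Fin n) (Fin n × Fin n) ℂ :=
  (∑ i : Fin n, Matrix.single i i (1:ℂ) ⊗ₖ Matrix.single i i (1:ℂ))
  + r • (∑ i : Fin n, ∑ j : Fin n,
      if i < j then Matrix.single j i (1:ℂ) ⊗ₖ Matrix.single i j (1:ℂ) else 0)
  + s⁻¹ • (∑ i : Fin n, ∑ j : Fin n,
      if i < j then Matrix.single i j (1:ℂ) ⊗ₖ Matrix.single j i (1:ℂ) else 0)
  + (1 - r * s⁻¹) • (∑ i : Fin n, ∑ j : Fin n,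
      if i < j then Matrix.single j j (1:ℂ) ⊗ₖ Matrix.single i i (1:ℂ) else 0)

/-- Given an operator `M` on `V ⊗ V`, the operator on `V^{⊗m}` acting as `M` in the
tensor factors `(a, b)` (with `a ≠ b`) and as the identity in all other factors.
Here `V^{⊗m}` is identified with `(Fin m → Fin n) → ℂ` via the basis
`v_{f 0} ⊗ ⋯ ⊗ v_{f (m-1)} ↔ f`. -/
noncomputable def op2At (n m : ℕ) (M : Matrix (Fin n × Fin n) (Fin n × Fin n) ℂ)
    (a b : Fin m) : Matrix (Fin m → Fin n) (Fin m → Fin n) ℂ :=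
  fun f g => M (f a, f b) (g a, g b) *
    ∏ l ∈ Finset.univ \ ({a, b} : Finset (Fin m)), (if f l = g l then (1:ℂ) else 0)

private lemma dsum {n : ℕ} (v : ℂ) (p : Fin n → Fin n → Prop) [∀ x y, Decidable (p x y)]
    (b d : Fin n) :
    (∑ x : Fin n, ∑ y : Fin n, if x = b ∧ y = d ∧ p x y then v else 0)
      = if p b d then v else 0 := by
  simp [ite_and, Finset.sum_ite_eq']

theorem Rhat_apply (n : ℕ) (r s : ℂ) (a b c d : Fin n) :
    Rhat n r s (a, b) (c, d) =
      (if a = b ∧ b = c ∧ c = d then (1:ℂ) else 0)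
      + (if c = b ∧ d = a ∧ b < a then r else 0)
      + (if c = b ∧ d = a ∧ a < b then s⁻¹ else 0)
      + (if c = a ∧ d = b ∧ b < a then (1 - r * s⁻¹) else 0) := by
  simp only [Rhat, Matrix.add_apply, Matrix.smul_apply, Matrix.sum_apply,
    apply_ite (fun M : Matrix (Fin n × Fin n) (Fin n × Fin n) ℂ => M (a,b) (c,d)),
    Matrix.kroneckerMap_apply, Matrix.single, Matrix.zero_apply,
    Matrix.of_apply, smul_eq_mul, mul_boole, ite_mul, zero_mul, one_mul,
    Finset.mul_sum, mul_ite, mul_zero, mul_one]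
  have e1 : (∑ x : Fin n, if x = b ∧ x = d then (if x = a ∧ x = c then (1:ℂ) else 0) else 0)
      = if a = b ∧ b = c ∧ c = d then (1:ℂ) else 0 := by
    rw [Finset.sum_congr rfl (g := fun x => if x = b ∧ (a = b ∧ b = c ∧ c = d) then (1:ℂ) else 0)
      (fun x _ => by split_ifs with p1 p2 p3 p4 p5 p6 p7 p8 <;> first | rfl | (exfalso; omega))]
    simp [ite_and, Finset.sum_ite_eq']
  have e2 : (∑ x : Fin n, ∑ y : Fin n,
        if x < y then if x = b ∧ y = d then (if y = a ∧ x = c then r else 0) else 0 else 0)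
      = if c = b ∧ d = a ∧ b < a then r else 0 := by
    rw [Finset.sum_congr rfl (fun x _ => Finset.sum_congr rfl
      (g := fun y => if x = b ∧ y = d ∧ (c = b ∧ d = a ∧ b < a) then r else 0)
      (fun y _ => by split_ifs with p1 p2 p3 p4 p5 p6 p7 p8 <;> first | rfl | (exfalso; omega)))]
    rw [dsum]
  have e3 : (∑ x : Fin n, ∑ y : Fin n,
        if x < y then if y = b ∧ x = d then (if x = a ∧ y = c then s⁻¹ else 0) else 0 else 0)
      = if c = b ∧ d = a ∧ a < b then s⁻¹ else 0 := by
    rw [Finset.sum_congr rfl (fun x _ => Finset.sum_congr rfl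
      (g := fun y => if x = d ∧ y = b ∧ (c = b ∧ d = a ∧ a < b) then s⁻¹ else 0)
      (fun y _ => by split_ifs with p1 p2 p3 p4 p5 p6 p7 p8 <;> first | rfl | (exfalso; omega)))]
    rw [dsum]
  have e4 : (∑ x : Fin n, ∑ y : Fin n,
        if x < y then if x = b ∧ x = d then (if y = a ∧ y = c then (1 - r*s⁻¹) else 0) else 0 else 0)
      = if c = a ∧ d = b ∧ b < a then (1 - r*s⁻¹) else 0 := by
    rw [Finset.sum_congr rfl (fun x _ => Finset.sum_congr rfl
      (g := fun y => if x = b ∧ y = a ∧ (c = a ∧ d = b ∧ b < a) then (1 - r*s⁻¹) else 0)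
      (fun y _ => by split_ifs with p1 p2 p3 p4 p5 p6 p7 p8 <;> first | rfl | (exfalso; omega)))]
    rw [dsum]
  rw [e1, e2, e3, e4]

theorem Rhat_sq (n : ℕ) (r s : ℂ) :
    Rhat n r s * Rhat n r s = (1 - r * s⁻¹) • Rhat n r s + (r * s⁻¹) • 1 := by
  ext ⟨a, b⟩ ⟨c, d⟩
  rw [Matrix.mul_apply]
  have hz : ∀ x y : Fin n, ¬(x = a ∧ y = b) → ¬(x = b ∧ y = a) →
      Rhat n r s (a, b) (x, y) = 0 := by
    intro x y h1 h2
    rw [Rhat_apply]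
    split_ifs with p1 p2 p3 p4 <;> first | (exfalso; omega) | simp
  have hsub : ({(a, b), (b, a)} : Finset (Fin n × Fin n)) ⊆ Finset.univ :=
    Finset.subset_univ _
  rw [← Finset.sum_subset hsub (fun x _ hx => by
    obtain ⟨x1, x2⟩ := x
    simp only [Finset.mem_insert, Finset.mem_singleton, Prod.mk.injEq, not_or, not_and] at hx
    rw [hz x1 x2 (by tauto) (by tauto), zero_mul])]
  rcases eq_or_ne a b with rfl | hab
  · rw [show ({(a, a), (a, a)} : Finset (Fin n × Fin n)) = {(a, a)} by simp,
      Finset.sum_singleton]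
    simp only [Rhat_apply, Matrix.add_apply, Matrix.smul_apply, Matrix.one_apply,
      Prod.mk.injEq, smul_eq_mul, mul_ite, mul_one, mul_zero, lt_self_iff_false,
      and_false, if_false, and_self, if_true, true_and, and_true, add_zero, zero_add]
    split_ifs with q1 q2 q3 q4 q5 q6 q7 q8 q9 q10 q11 q12 <;> first | ring1 | (exfalso; omega)
  · rw [Finset.sum_pair (by simp [Prod.mk.injEq]; tauto)]
    have h1 : ¬ a = b := hab
    have h2 : ¬ b = a := fun h => hab h.symm
    rcases lt_or_gt_of_ne hab with hlt | hgt
    · have h3 : ¬ b < a := by omega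
      simp only [Rhat_apply, Matrix.add_apply, Matrix.smul_apply, Matrix.one_apply,
        Prod.mk.injEq, smul_eq_mul, mul_ite, mul_one, mul_zero, lt_self_iff_false,
        and_false, false_and, if_false, and_self, if_true, true_and, and_true, add_zero, zero_add,
        h1, h2, h3, hlt, if_true, if_false]
      split_ifs with q1 q2 q3 q4 q5 q6 q7 q8 q9 q10 q11 q12 <;> first | ring1 | (exfalso; omega)
    · have h3 : ¬ a < b := by omega
      simp only [Rhat_apply, Matrix.add_apply, Matrix.smul_apply, Matrix.one_apply,
        Prod.mk.injEq, smul_eq_mul, mul_ite, mul_one, mul_zero, lt_self_iff_false,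
        and_false, false_and, if_false, and_self, if_true, true_and, and_true, add_zero, zero_add,
        h1, h2, h3, hgt, if_true, if_false]
      split_ifs with q1 q2 q3 q4 q5 q6 q7 q8 q9 q10 q11 q12 <;> first | ring1 | (exfalso; omega)

/-- **Minimal polynomial of `Ř`.** If `n ≥ 2` and `s ≠ −r`, the minimal polynomial of the
R-matrix `Ř` on `V ⊗ V` is `(t − 1)(t + r s⁻¹)`. -/
theorem Rhat_minpoly (n : ℕ) (hn : 2 ≤ n) (r s : ℂ) (hr : r ≠ 0) (hs : s ≠ 0)
    (hsr : s ≠ -r) :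
    minpoly ℂ (Rhat n r s) =
      (Polynomial.X - 1) * (Polynomial.X + Polynomial.C (r * s⁻¹)) := by
  haveI : NeZero n := ⟨by omega⟩
  set M := Rhat n r s with hM
  set c : ℂ := r * s⁻¹ with hc
  have hint : IsIntegral ℂ M := IsIntegral.of_finite ℂ M
  have h1m : ((Polynomial.X : Polynomial ℂ) - 1).Monic := by
    simpa using Polynomial.monic_X_sub_C (1 : ℂ)
  have hp_monic : ((Polynomial.X - 1) * (Polynomial.X + Polynomial.C c) : Polynomial ℂ).Monic :=
    h1m.mul (Polynomial.monic_X_add_C c)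
  have haev : Polynomial.aeval M ((Polynomial.X - 1) * (Polynomial.X + Polynomial.C c)) = 0 := by
    rw [_root_.map_mul, _root_.map_sub, _root_.map_add, Polynomial.aeval_X, Polynomial.aeval_one,
      Polynomial.aeval_C, Algebra.algebraMap_eq_smul_one, sub_mul, mul_add, mul_smul_comm,
      mul_one, one_mul, hM, Rhat_sq]
    rw [hc] at *
    module
  have hdvd : minpoly ℂ M ∣ (Polynomial.X - 1) * (Polynomial.X + Polynomial.C c) :=
    minpoly.dvd ℂ M haev
  have hdeg : ((Polynomial.X - 1) * (Polynomial.X + Polynomial.C c) : Polynomial ℂ).natDegree = 2 := by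
    compute_degree!
  haveI : Nonempty (Fin n) := ⟨⟨0, by omega⟩⟩
  have hle : (minpoly ℂ M).natDegree ≤ 2 := by
    rw [← hdeg]
    exact Polynomial.natDegree_le_of_dvd hdvd hp_monic.ne_zero
  have hpos : 0 < (minpoly ℂ M).natDegree := minpoly.natDegree_pos hint
  have hne1 : (minpoly ℂ M).natDegree ≠ 1 := by
    intro h1
    have heq := (minpoly.monic hint).eq_X_add_C h1
    have h0 := minpoly.aeval ℂ M
    rw [heq, _root_.map_add, Polynomial.aeval_X, Polynomial.aeval_C,
      Algebra.algebraMap_eq_smul_one] at h0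
    set e : ℂ := (minpoly ℂ M).coeff 0
    have i0 : Fin n := ⟨0, by omega⟩
    have hent := congrFun (congrFun (congrArg (fun A => (A : Matrix _ _ ℂ))
      h0) (⟨1, by omega⟩, ⟨0, by omega⟩)) (⟨0, by omega⟩, ⟨1, by omega⟩)
    simp only [Matrix.add_apply, Matrix.smul_apply, Matrix.one_apply, Matrix.zero_apply,
      Prod.mk.injEq, smul_eq_mul, mul_ite, mul_one, mul_zero] at hent
    rw [hM, Rhat_apply] at hent
    simp only [Fin.mk.injEq, Fin.mk_lt_mk] at hent
    norm_num at hent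
    exact hr hent
  have h2 : (minpoly ℂ M).natDegree = 2 := by omega
  refine Polynomial.eq_of_dvd_of_natDegree_le_of_leadingCoeff hdvd (by omega) ?_
  rw [(minpoly.monic hint).leadingCoeff, hp_monic.leadingCoeff]
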